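/- Let Q be an NQPR in dimension d ≥ 2. Then there exists an index j such that the minimal eigenvalue of Q_j is at most −(√(d+1) − 1)/d. Equivalently, the negativity N(Q) = −min_j λ_min(Q_j) satisfies N(Q) ≥ (√(d+1) − 1)/d. -/

import Mathlib

open Matrix in
lemma trace_eq_sum_eigs {d : ℕ} {A : Matrix (Fin d) (Fin d) ℂ} (hA : A.IsHermitian) :
    A.trace = ∑ i, (hA.eigenvalues i : ℂ) := by
  set U : Matrix (Fin d) (Fin d) ℂ := (hA.eigenvectorUnitary : Matrix (Fin d) (Fin d) ℂ) with hU
  have hu : star U * U = 1 := by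
    exact (hA.eigenvectorUnitary).2.1
  have hspec : A = (hA.eigenvectorUnitary : Matrix (Fin d) (Fin d) ℂ) *
      diagonal (RCLike.ofReal ∘ hA.eigenvalues) *
      star (hA.eigenvectorUnitary : Matrix (Fin d) (Fin d) ℂ) := hA.spectral_theorem
  conv_lhs => rw [hspec]
  rw [Matrix.trace_mul_comm, ← mul_assoc, ← hU, hu, one_mul, Matrix.trace_diagonal]
  rfl

open Matrix in
lemma trace_sq_eq_sum_sq_eigs {d : ℕ} {A : Matrix (Fin d) (Fin d) ℂ} (hA : A.IsHermitian) :
    (A * A).trace = ∑ i, ((hA.eigenvalues i : ℂ))^2 := by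
  set U : Matrix (Fin d) (Fin d) ℂ := (hA.eigenvectorUnitary : Matrix (Fin d) (Fin d) ℂ) with hU
  set D : Matrix (Fin d) (Fin d) ℂ := diagonal (RCLike.ofReal ∘ hA.eigenvalues) with hD
  have hu : star U * U = 1 := by
    exact (hA.eigenvectorUnitary).2.1
  have h : A = U * D * star U := hA.spectral_theorem
  have h2 : A * A = U * (D * D) * star U := by
    rw [h]; simp only [mul_assoc]; rw [← mul_assoc (star U) U, hu, one_mul]
  rw [h2, Matrix.trace_mul_comm, ← mul_assoc, hu, one_mul, hD, diagonal_mul_diagonal,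
    Matrix.trace_diagonal]
  simp [sq]

/-- For any NQPR `Q` in dimension `d ≥ 2`, there is an index `j` such that the
minimal eigenvalue of `Q j` is at most `−(√(d+1) − 1)/d`. -/
theorem stmt_2 (d : ℕ) (hd : 2 ≤ d)
    (Q : Fin (d ^ 2) → Matrix (Fin d) (Fin d) ℂ)
    (hherm : ∀ j, (Q j).IsHermitian)
    (htr : ∀ j, (Q j).trace = 1)
    (hpair : ∀ j k, (Q j * Q k).trace = if j = k then (d : ℂ) else 0)
    (hsum : ∑ j, Q j = (d : ℂ) • (1 : Matrix (Fin d) (Fin d) ℂ)) :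
    ∃ j, (⨅ i, (hherm j).eigenvalues i) ≤ -((Real.sqrt (d + 1) - 1) / d) := by
  have hd0 : 0 < d := by omega
  have hd0' : (0:ℝ) < d := by exact_mod_cast hd0
  have hd2 : (2:ℝ) ≤ d := by exact_mod_cast hd
  have hdsq : 0 < d ^ 2 := by positivity
  refine ⟨⟨0, hdsq⟩, ?_⟩
  set j : Fin (d^2) := ⟨0, hdsq⟩ with hj
  have hA := hherm j
  set μ : Fin d → ℝ := (hherm j).eigenvalues with hμ
  have : Nonempty (Fin d) := ⟨⟨0, hd0⟩⟩
  -- sum of eigenvalues = 1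
  have hsum1 : ∑ i, μ i = 1 := by
    have h := trace_eq_sum_eigs (hherm j)
    rw [htr j] at h
    exact_mod_cast h.symm
  -- sum of squares = d
  have hsum2 : ∑ i, (μ i)^2 = (d:ℝ) := by
    have h := trace_sq_eq_sum_sq_eigs (hherm j)
    rw [hpair j j, if_pos rfl] at h
    exact_mod_cast h.symm
  set m : ℝ := ⨅ i, μ i with hm
  have hmle : ∀ i, m ≤ μ i := fun i => ciInf_le (Finite.bddBelow_range _) i
  -- d*m ≤ 1
  have hm1 : (d:ℝ) * m ≤ 1 := by
    have h : ∑ _i : Fin d, m ≤ ∑ i, μ i := Finset.sum_le_sum fun i _ => hmle i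
    rw [hsum1] at h
    simpa [Finset.sum_const, Finset.card_univ, nsmul_eq_mul] using h
  -- ∑ (μ i - m) = 1 - d*m
  have hS : ∑ i, (μ i - m) = 1 - (d:ℝ) * m := by
    rw [Finset.sum_sub_distrib, hsum1]
    simp [Finset.sum_const, Finset.card_univ, nsmul_eq_mul]
  -- ∑ (μ i - m)^2 ≤ (1 - d*m)^2
  have hsq : ∑ i, (μ i - m)^2 ≤ (1 - (d:ℝ) * m)^2 := by
    have h1 : ∀ i ∈ Finset.univ, (μ i - m)^2 ≤ (μ i - m) * (1 - (d:ℝ)*m) := by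
      intro i _
      have h0 : 0 ≤ μ i - m := by linarith [hmle i]
      have hle : μ i - m ≤ 1 - (d:ℝ)*m := by
        rw [← hS]
        exact Finset.single_le_sum (f := fun k => μ k - m)
          (fun k _ => sub_nonneg.mpr (hmle k)) (Finset.mem_univ i)
      nlinarith
    calc ∑ i, (μ i - m)^2 ≤ ∑ i, (μ i - m) * (1 - (d:ℝ)*m) := Finset.sum_le_sum h1
      _ = (1 - (d:ℝ)*m)^2 := by rw [← Finset.sum_mul, hS]; ring
  -- expand: get the quadratic inequality
  have hexp : ∑ i, (μ i - m)^2 = (d:ℝ) - 2*m + (d:ℝ)*m^2 := by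
    have : ∀ i ∈ Finset.univ, (μ i - m)^2 = (μ i)^2 - 2*m*(μ i) + m^2 := fun i _ => by ring
    rw [Finset.sum_congr rfl this]
    rw [Finset.sum_add_distrib, Finset.sum_sub_distrib, hsum2, ← Finset.mul_sum, hsum1]
    simp [Finset.sum_const, Finset.card_univ, nsmul_eq_mul]
  have hq : (d:ℝ) - 2*m + (d:ℝ)*m^2 ≤ (1 - (d:ℝ)*m)^2 := hexp ▸ hsq
  have hq2 : 0 ≤ (d:ℝ)*m^2 - 2*m - 1 := by nlinarith
  set s : ℝ := Real.sqrt (d + 1) with hs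
  have hs2 : s^2 = (d:ℝ) + 1 := Real.sq_sqrt (by positivity)
  have hs0 : 0 < s := Real.sqrt_pos.mpr (by positivity)
  have hkey : s^2 ≤ (1 - (d:ℝ)*m)^2 := by nlinarith [mul_nonneg hd0'.le hq2]
  by_contra hcon
  push_neg at hcon
  have h' : (1-s)/(d:ℝ) < m := by
    rw [show (1-s)/(d:ℝ) = -((s-1)/d) by ring]; exact hcon
  have ht : 1 - s < m * (d:ℝ) := (div_lt_iff₀ hd0').mp h'
  nlinarith [mul_nonneg (by linarith : (0:ℝ) ≤ 1 - (d:ℝ)*m) (by linarith : (0:ℝ) ≤ s - (1 - (d:ℝ)*m)),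
    mul_pos hs0 (by linarith : (0:ℝ) < s - (1 - (d:ℝ)*m))]
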